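/- There exist a chain π on a 4-element set, strict partial orders ω1, ω2 with (ω1 ∪ ω2)^+ a strict partial order, and a total preorder ≤_π on dir_π, such that ω1 and ω2 are not coordinated with respect to π and the induced revision operator violates postulate P3, i.e., add^*_{≤_π}((ω1∪ω2)^+) ⊄ (add^*_{≤_π}(ω1) ∪ ω2)^+. Concretely: V = {1,2,3,4}, π the chain 1 > 2 > 3 > 4, ω1 = {(4,1)}, ω2 = {(3,1)}, and ≤_π ranking (1,2) < (2,3) < (3,4): then (3,4) ∈ add^*_{≤_π}((ω1∪ω2)^+) but (3,4) ∉ (add^*_{≤_π}(ω1) ∪ ω2)^+. -/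

import Mathlib

open Classical

variable {V : Type*}

/-- Transitive closure of a set of pairs (a relation). -/
def tc (R : Set (V × V)) : Set (V × V) :=
  {p | Relation.TransGen (fun a b => (a, b) ∈ R) p.1 p.2}

/-- A strict partial order: transitive and irreflexive. -/
def IsSPO (R : Set (V × V)) : Prop :=
  (∀ a b c, (a, b) ∈ R → (b, c) ∈ R → (a, c) ∈ R) ∧ ∀ a, (a, a) ∉ R

/-- The chain determined by a duplicate-free list `l` (earlier = better):
`(i,j)` is in the chain iff `i` occurs strictly before `j` in `l`. -/
def chainSet (l : List V) : Set (V × V) := {p | [p.1, p.2].Sublist l}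

/-- The direct comparisons of the chain `l`: pairs of consecutive elements. -/
def dirSet (l : List V) : Set (V × V) := {p | p ∈ l.zip l.tail}

/-- Cycle-free part of `(π ∪ ω)⁺`. -/
def cf (l : List V) (w : Set (V × V)) : Set (V × V) :=
  {p | p ∈ tc (chainSet l ∪ w) ∧ (p.2, p.1) ∉ tc (chainSet l ∪ w)}

/-- Cyclic part of `π` with respect to `ω`: direct comparisons involved in a cycle. -/
def cyc (l : List V) (w : Set (V × V)) : Set (V × V) :=
  {p | p ∈ dirSet l ∧ (p.2, p.1) ∈ tc (chainSet l ∪ w)}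

/-- A total preorder on a set `S` of comparisons. -/
def IsTotalPreorderOn (le : V × V → V × V → Prop) (S : Set (V × V)) : Prop :=
  (∀ a ∈ S, ∀ b ∈ S, ∀ c ∈ S, le a b → le b c → le a c) ∧
    (∀ a ∈ S, ∀ b ∈ S, le a b ∨ le b a)

/-- A strict linear order on a set `S` of comparisons. -/
def IsLinearOn (lt : V × V → V × V → Prop) (S : Set (V × V)) : Prop :=
  (∀ a ∈ S, ∀ b ∈ S, ∀ c ∈ S, lt a b → lt b c → lt a c) ∧
    (∀ a ∈ S, ∀ b ∈ S, a ≠ b → lt a b ∨ lt b a) ∧ (∀ a ∈ S, ¬ lt a a)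

/-- The `≤`-minimal (best) elements of `S`. -/
def minset (le : V × V → V × V → Prop) (S : Set (V × V)) : Set (V × V) :=
  {c | c ∈ S ∧ ∀ d ∈ S, le c d}

/-- Remaining elements of `S` after peeling off the first `n` levels. -/
def rem (le : V × V → V × V → Prop) (S : Set (V × V)) : ℕ → Set (V × V)
  | 0 => S
  | n + 1 => rem le S n \ minset le (rem le S n)

/-- The `i`-th level (for `i ≥ 1`) of `S` under the total preorder `le`. -/
def level (le : V × V → V × V → Prop) (S : Set (V × V)) (i : ℕ) : Set (V × V) :=
  minset le (rem le S (i - 1))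

/-- The addition operator: `addSeq le l w 0 = (ω ∪ cf(π,ω))⁺`, and step `i+1`
tries to add level `i+1` of `dir_π` intersected with `cyc(π,ω)`. -/
noncomputable def addSeq (le : V × V → V × V → Prop) (l : List V) (w : Set (V × V)) :
    ℕ → Set (V × V)
  | 0 => tc (w ∪ cf l w)
  | i + 1 =>
    if IsSPO (tc (addSeq le l w i ∪ (minset le (rem le (dirSet l) i) ∩ cyc l w))) then
      tc (addSeq le l w i ∪ (minset le (rem le (dirSet l) i) ∩ cyc l w))
    else addSeq le l w i

/-- The fixed point of the addition operator. -/
noncomputable def addStar (le : V × V → V × V → Prop) (l : List V) (w : Set (V × V)) :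
    Set (V × V) :=
  ⋃ i, addSeq le l w i

/-- The set of `π`-completions of `ω`. -/
def completions (l : List V) (w : Set (V × V)) : Set (Set (V × V)) :=
  {R | ∃ δ, δ ⊆ dirSet l ∧ R = tc (w ∪ δ) ∧ IsSPO R}

/-- `ω₁` and `ω₂` are coordinated with respect to the chain `l`. -/
def Coordinated (l : List V) (w1 w2 : Set (V × V)) : Prop :=
  ∀ δ ⊆ cyc l w1,
    (∀ p ∈ δ, p ∉ tc (w1 ∪ w2) ∧ (p.2, p.1) ∉ tc (w1 ∪ w2)) →
    IsSPO (tc (w1 ∪ δ)) → IsSPO (tc (tc (w1 ∪ w2) ∪ δ))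

namespace Aux

abbrev P4 := Fin 4 × Fin 4

def L (xs : List P4) : Set P4 := {p | p ∈ xs}

def leP : P4 → P4 → Prop := fun c d => c.1 ≤ d.1

lemma mem_L_of {p : P4} {xs : List P4} (h : p ∈ xs) : p ∈ L xs := h

lemma isSPO_L (xs : List P4)
    (h : (∀ a b c : Fin 4, (a,b) ∈ xs → (b,c) ∈ xs → (a,c) ∈ xs) ∧ ∀ a : Fin 4, (a,a) ∉ xs) :
    IsSPO (L xs) := h

lemma L_sub {xs ys : List P4} (h : ∀ p : P4, p ∈ xs → p ∈ ys) : L xs ⊆ L ys := h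

lemma L_eq (xs ys : List P4) (h : ∀ p : P4, p ∈ xs ↔ p ∈ ys) : L xs = L ys := Set.ext h

lemma L_union (xs ys : List P4) : L xs ∪ L ys = L (xs ++ ys) :=
  Set.ext fun p => by simp [L, List.mem_append]

lemma inter_L (xs ys zs : List P4) (h : ∀ p : P4, (p ∈ xs ∧ p ∈ ys) ↔ p ∈ zs) :
    L xs ∩ L ys = L zs := Set.ext h

lemma diff_L (xs ys zs : List P4) (h : ∀ p : P4, (p ∈ xs ∧ ¬ p ∈ ys) ↔ p ∈ zs) :
    L xs \ L ys = L zs := Set.ext h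

lemma minset_L (xs ys : List P4)
    (h : ∀ p : P4, (p ∈ xs ∧ ∀ d : P4, d ∈ xs → p.1 ≤ d.1) ↔ p ∈ ys) :
    minset leP (L xs) = L ys := Set.ext h

lemma minset_empty : minset leP (∅ : Set P4) = ∅ := by
  ext p; simp [minset]

def comp1 (R : List P4) : List P4 :=
  (R ++ R.flatMap (fun p => R.filterMap fun q =>
    if p.2 = q.1 then some (p.1, q.2) else none)).dedup

lemma self_sub_comp1 {R : List P4} {p} (h : p ∈ R) : p ∈ comp1 R := by
  simp only [comp1, List.mem_dedup, List.mem_append]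
  exact Or.inl h

lemma self_sub_iter (R : List P4) (k : ℕ) {p} (h : p ∈ R) : p ∈ comp1^[k] R := by
  induction k with
  | zero => exact h
  | succ n ih => rw [Function.iterate_succ_apply']; exact self_sub_comp1 ih

lemma tc_sub {R S : Set P4} (h1 : R ⊆ S)
    (h2 : ∀ a b c : Fin 4, (a, b) ∈ S → (b, c) ∈ S → (a, c) ∈ S) : tc R ⊆ S := by
  rintro ⟨a, b⟩ h
  have h' : Relation.TransGen (fun x y => (x, y) ∈ R) a b := h
  clear h
  induction h' with
  | single h => exact h1 h
  | tail _ h ih => exact h2 _ _ _ ih (h1 h)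

lemma tc_mono {R S : Set P4} (h : R ⊆ S) : tc R ⊆ tc S := by
  rintro ⟨a, b⟩ hp
  exact Relation.TransGen.mono (fun x y hxy => @h (x, y) hxy) _ _ hp

lemma tc_tc {R : Set P4} : tc (tc R) ⊆ tc R :=
  tc_sub (fun _ h => h) (fun _ _ _ h1 h2 => Relation.TransGen.trans h1 h2)

lemma comp1_sub_tc (R : List P4) : L (comp1 R) ⊆ tc (L R) := by
  rintro ⟨a, b⟩ hp
  simp only [L, Set.mem_setOf_eq, comp1, List.mem_dedup, List.mem_append,
    List.mem_flatMap, List.mem_filterMap] at hp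
  rcases hp with h | ⟨q, hq, r, hr, hqr⟩
  · exact Relation.TransGen.single h
  · split at hqr
    · rename_i heq
      cases hqr
      exact Relation.TransGen.trans
        (Relation.TransGen.single (show (q.1, q.2) ∈ L R from hq))
        (heq ▸ Relation.TransGen.single (show (r.1, r.2) ∈ L R from hr))
    · cases hqr

lemma iter_sub_tc (R : List P4) (k : ℕ) : L (comp1^[k] R) ⊆ tc (L R) := by
  induction k with
  | zero => exact fun p h => Relation.TransGen.single h
  | succ n ih =>
    rw [Function.iterate_succ_apply']
    exact fun p hp => tc_tc (tc_mono ih (comp1_sub_tc _ hp))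

lemma tc_L_eq (R C : List P4) (k : ℕ)
    (h1 : ∀ p : P4, p ∈ comp1^[k] R ↔ p ∈ C)
    (htr : ∀ a b c : Fin 4, (a, b) ∈ C → (b, c) ∈ C → (a, c) ∈ C) :
    tc (L R) = L C := by
  have htr' : ∀ a b c : Fin 4, (a, b) ∈ comp1^[k] R → (b, c) ∈ comp1^[k] R →
      (a, c) ∈ comp1^[k] R :=
    fun a b c ha hb => (h1 _).mpr (htr a b c ((h1 _).mp ha) ((h1 _).mp hb))
  refine Set.Subset.antisymm
    (tc_sub (fun p hp => (h1 _).mp (self_sub_iter R k hp)) htr) ?_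
  exact fun p hp => iter_sub_tc R k ((h1 p).mpr hp)

-- concrete lists
def w1L : List P4 := [(3,0)]
def w2L : List P4 := [(2,0)]
def wSL : List P4 := [(3,0),(2,0)]
def chainL : List P4 := [(0,1),(0,2),(0,3),(1,2),(1,3),(2,3)]
def dirL : List P4 := [(0,1),(1,2),(2,3)]
def allL : List P4 :=
  [(0,0),(0,1),(0,2),(0,3),(1,0),(1,1),(1,2),(1,3),
   (2,0),(2,1),(2,2),(2,3),(3,0),(3,1),(3,2),(3,3)]
def s1L : List P4 := [(3,0),(0,1),(3,1)]
def A1L : List P4 := [(3,0),(0,1),(3,1),(1,2),(0,2),(3,2)]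
def B1L : List P4 := [(3,0),(2,0),(0,1),(3,1),(2,1)]
def B3L : List P4 := [(3,0),(2,0),(0,1),(3,1),(2,1),(2,3)]
def C1L : List P4 :=
  [(0,0),(0,1),(0,2),(1,0),(1,1),(1,2),(2,0),(2,1),(2,2),(3,0),(3,1),(3,2)]

end Aux

open Aux in
theorem stmt11 :
    ∃ (l : List (Fin 4)) (w1 w2 : Set (Fin 4 × Fin 4))
      (le : Fin 4 × Fin 4 → Fin 4 × Fin 4 → Prop),
      l = [0, 1, 2, 3] ∧ w1 = {((3 : Fin 4), (0 : Fin 4))} ∧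
      w2 = {((2 : Fin 4), (0 : Fin 4))} ∧
      le = (fun c d => c.1 ≤ d.1) ∧
      l.Nodup ∧ IsSPO w1 ∧ IsSPO w2 ∧ IsSPO (tc (w1 ∪ w2)) ∧
      IsTotalPreorderOn le (dirSet l) ∧
      ¬ Coordinated l w1 w2 ∧
      ¬ addStar le l (tc (w1 ∪ w2)) ⊆ tc (addStar le l w1 ∪ w2) ∧
      ((2 : Fin 4), (3 : Fin 4)) ∈ addStar le l (tc (w1 ∪ w2)) ∧
      ((2 : Fin 4), (3 : Fin 4)) ∉ tc (addStar le l w1 ∪ w2) := by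
  have h_tc12 : tc (L w1L ∪ L w2L) = L wSL := by
    rw [L_union]; exact tc_L_eq _ wSL 0 (by decide) (by decide)
  have h_chain : chainSet ([0,1,2,3] : List (Fin 4)) = L chainL := by
    ext ⟨a,b⟩
    show [a,b].Sublist [0,1,2,3] ↔ (a,b) ∈ chainL
    revert a b; decide
  have h_dir : dirSet ([0,1,2,3] : List (Fin 4)) = L dirL := by
    ext ⟨a,b⟩
    show (a,b) ∈ ([0,1,2,3] : List (Fin 4)).zip [1,2,3] ↔ (a,b) ∈ dirL
    revert a b; decide
  have h_tcc1 : tc (chainSet ([0,1,2,3] : List (Fin 4)) ∪ L w1L) = L allL := by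
    rw [h_chain, L_union]; exact tc_L_eq _ allL 2 (by decide) (by decide)
  have h_tccS : tc (chainSet ([0,1,2,3] : List (Fin 4)) ∪ L wSL) = L allL := by
    rw [h_chain, L_union]; exact tc_L_eq _ allL 2 (by decide) (by decide)
  have h_cf1 : cf ([0,1,2,3] : List (Fin 4)) (L w1L) = ∅ := by
    ext ⟨a,b⟩
    show ((a,b) ∈ tc (chainSet ([0,1,2,3] : List (Fin 4)) ∪ L w1L) ∧
      ¬ (b,a) ∈ tc (chainSet ([0,1,2,3] : List (Fin 4)) ∪ L w1L)) ↔ (a,b) ∈ (∅ : Set P4)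
    rw [h_tcc1]
    show ((a,b) ∈ allL ∧ ¬ (b,a) ∈ allL) ↔ False
    revert a b; decide
  have h_cfS : cf ([0,1,2,3] : List (Fin 4)) (L wSL) = ∅ := by
    ext ⟨a,b⟩
    show ((a,b) ∈ tc (chainSet ([0,1,2,3] : List (Fin 4)) ∪ L wSL) ∧
      ¬ (b,a) ∈ tc (chainSet ([0,1,2,3] : List (Fin 4)) ∪ L wSL)) ↔ (a,b) ∈ (∅ : Set P4)
    rw [h_tccS]
    show ((a,b) ∈ allL ∧ ¬ (b,a) ∈ allL) ↔ False
    revert a b; decide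
  have h_cyc1 : cyc ([0,1,2,3] : List (Fin 4)) (L w1L) = L dirL := by
    ext ⟨a,b⟩
    show ((a,b) ∈ dirSet ([0,1,2,3] : List (Fin 4)) ∧
      (b,a) ∈ tc (chainSet ([0,1,2,3] : List (Fin 4)) ∪ L w1L)) ↔ (a,b) ∈ L dirL
    rw [h_tcc1, h_dir]
    show ((a,b) ∈ dirL ∧ (b,a) ∈ allL) ↔ (a,b) ∈ dirL
    revert a b; decide
  have h_cycS : cyc ([0,1,2,3] : List (Fin 4)) (L wSL) = L dirL := by
    ext ⟨a,b⟩
    show ((a,b) ∈ dirSet ([0,1,2,3] : List (Fin 4)) ∧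
      (b,a) ∈ tc (chainSet ([0,1,2,3] : List (Fin 4)) ∪ L wSL)) ↔ (a,b) ∈ L dirL
    rw [h_tccS, h_dir]
    show ((a,b) ∈ dirL ∧ (b,a) ∈ allL) ↔ (a,b) ∈ dirL
    revert a b; decide
  -- minset / rem ladder
  have h_minD : minset leP (L dirL) = L [(0,1)] := minset_L _ _ (by decide)
  have h_min1 : minset leP (L [(1,2),(2,3)]) = L [(1,2)] := minset_L _ _ (by decide)
  have h_min2 : minset leP (L [(2,3)]) = L [(2,3)] := minset_L _ _ (by decide)
  have h_rem0 : rem leP (dirSet ([0,1,2,3] : List (Fin 4))) 0 = L dirL := h_dir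
  have h_rem1 : rem leP (dirSet ([0,1,2,3] : List (Fin 4))) 1 = L [(1,2),(2,3)] := by
    show rem leP (dirSet ([0,1,2,3] : List (Fin 4))) 0 \
      minset leP (rem leP (dirSet ([0,1,2,3] : List (Fin 4))) 0) = _
    rw [h_rem0, h_minD]; exact diff_L _ _ _ (by decide)
  have h_rem2 : rem leP (dirSet ([0,1,2,3] : List (Fin 4))) 2 = L [(2,3)] := by
    show rem leP (dirSet ([0,1,2,3] : List (Fin 4))) 1 \
      minset leP (rem leP (dirSet ([0,1,2,3] : List (Fin 4))) 1) = _
    rw [h_rem1, h_min1]; exact diff_L _ _ _ (by decide)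
  have h_rem3 : rem leP (dirSet ([0,1,2,3] : List (Fin 4))) 3 = ∅ := by
    show rem leP (dirSet ([0,1,2,3] : List (Fin 4))) 2 \
      minset leP (rem leP (dirSet ([0,1,2,3] : List (Fin 4))) 2) = _
    rw [h_rem2, h_min2]
    ext ⟨a,b⟩
    show ((a,b) ∈ ([(2,3)] : List P4) ∧ ¬ (a,b) ∈ ([(2,3)] : List P4)) ↔ False
    revert a b; decide
  have h_remE : ∀ n, rem leP (dirSet ([0,1,2,3] : List (Fin 4))) (n+3) = ∅ := by
    intro n
    induction n with
    | zero => exact h_rem3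
    | succ m ih =>
      show rem leP (dirSet ([0,1,2,3] : List (Fin 4))) (m+3) \
        minset leP (rem leP (dirSet ([0,1,2,3] : List (Fin 4))) (m+3)) = _
      rw [ih, minset_empty, Set.empty_diff]
  -- addSeq for w1
  have e0 : addSeq leP [0,1,2,3] (L w1L) 0 = L w1L := by
    show tc (L w1L ∪ cf ([0,1,2,3] : List (Fin 4)) (L w1L)) = _
    rw [h_cf1, Set.union_empty]
    exact tc_L_eq _ w1L 0 (by decide) (by decide)
  have i0 : minset leP (rem leP (dirSet ([0,1,2,3] : List (Fin 4))) 0) ∩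
      cyc ([0,1,2,3] : List (Fin 4)) (L w1L) = L [(0,1)] := by
    rw [h_rem0, h_minD, h_cyc1]; exact inter_L _ _ _ (by decide)
  have e1 : addSeq leP [0,1,2,3] (L w1L) 1 = L s1L := by
    have h : addSeq leP [0,1,2,3] (L w1L) 1 =
        if IsSPO (tc (addSeq leP [0,1,2,3] (L w1L) 0 ∪
          (minset leP (rem leP (dirSet ([0,1,2,3] : List (Fin 4))) 0) ∩
            cyc ([0,1,2,3] : List (Fin 4)) (L w1L)))) then
          tc (addSeq leP [0,1,2,3] (L w1L) 0 ∪
            (minset leP (rem leP (dirSet ([0,1,2,3] : List (Fin 4))) 0) ∩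
              cyc ([0,1,2,3] : List (Fin 4)) (L w1L)))
        else addSeq leP [0,1,2,3] (L w1L) 0 := rfl
    rw [h, e0, i0, L_union, tc_L_eq (w1L ++ [(0,1)]) s1L 2 (by decide) (by decide),
      if_pos (isSPO_L s1L (by decide))]
  have i1 : minset leP (rem leP (dirSet ([0,1,2,3] : List (Fin 4))) 1) ∩
      cyc ([0,1,2,3] : List (Fin 4)) (L w1L) = L [(1,2)] := by
    rw [h_rem1, h_min1, h_cyc1]; exact inter_L _ _ _ (by decide)
  have e2 : addSeq leP [0,1,2,3] (L w1L) 2 = L A1L := by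
    have h : addSeq leP [0,1,2,3] (L w1L) 2 =
        if IsSPO (tc (addSeq leP [0,1,2,3] (L w1L) 1 ∪
          (minset leP (rem leP (dirSet ([0,1,2,3] : List (Fin 4))) 1) ∩
            cyc ([0,1,2,3] : List (Fin 4)) (L w1L)))) then
          tc (addSeq leP [0,1,2,3] (L w1L) 1 ∪
            (minset leP (rem leP (dirSet ([0,1,2,3] : List (Fin 4))) 1) ∩
              cyc ([0,1,2,3] : List (Fin 4)) (L w1L)))
        else addSeq leP [0,1,2,3] (L w1L) 1 := rfl
    rw [h, e1, i1, L_union, tc_L_eq (s1L ++ [(1,2)]) A1L 2 (by decide) (by decide),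
      if_pos (isSPO_L A1L (by decide))]
  have i2 : minset leP (rem leP (dirSet ([0,1,2,3] : List (Fin 4))) 2) ∩
      cyc ([0,1,2,3] : List (Fin 4)) (L w1L) = L [(2,3)] := by
    rw [h_rem2, h_min2, h_cyc1]; exact inter_L _ _ _ (by decide)
  have e3 : addSeq leP [0,1,2,3] (L w1L) 3 = L A1L := by
    have h : addSeq leP [0,1,2,3] (L w1L) 3 =
        if IsSPO (tc (addSeq leP [0,1,2,3] (L w1L) 2 ∪
          (minset leP (rem leP (dirSet ([0,1,2,3] : List (Fin 4))) 2) ∩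
            cyc ([0,1,2,3] : List (Fin 4)) (L w1L)))) then
          tc (addSeq leP [0,1,2,3] (L w1L) 2 ∪
            (minset leP (rem leP (dirSet ([0,1,2,3] : List (Fin 4))) 2) ∩
              cyc ([0,1,2,3] : List (Fin 4)) (L w1L)))
        else addSeq leP [0,1,2,3] (L w1L) 2 := rfl
    rw [h, e2, i2, L_union]
    rw [if_neg ?hneg]
    case hneg =>
      intro hS
      exact hS.2 2 (Relation.TransGen.tail
        (Relation.TransGen.single (mem_L_of (by decide : ((2:Fin 4),(3:Fin 4)) ∈ A1L ++ [(2,3)])))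
        (mem_L_of (by decide : ((3:Fin 4),(2:Fin 4)) ∈ A1L ++ [(2,3)])))
  have htcA1 : tc (L A1L) = L A1L := tc_L_eq _ A1L 0 (by decide) (by decide)
  have eAll : ∀ n, addSeq leP [0,1,2,3] (L w1L) (n+3) = L A1L := by
    intro n
    induction n with
    | zero => exact e3
    | succ m ih =>
      have h : addSeq leP [0,1,2,3] (L w1L) (m+1+3) =
          if IsSPO (tc (addSeq leP [0,1,2,3] (L w1L) (m+3) ∪
            (minset leP (rem leP (dirSet ([0,1,2,3] : List (Fin 4))) (m+3)) ∩
              cyc ([0,1,2,3] : List (Fin 4)) (L w1L)))) then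
            tc (addSeq leP [0,1,2,3] (L w1L) (m+3) ∪
              (minset leP (rem leP (dirSet ([0,1,2,3] : List (Fin 4))) (m+3)) ∩
                cyc ([0,1,2,3] : List (Fin 4)) (L w1L)))
          else addSeq leP [0,1,2,3] (L w1L) (m+3) := rfl
      rw [h, ih, h_remE m, minset_empty, Set.empty_inter, Set.union_empty, htcA1,
        if_pos (isSPO_L A1L (by decide))]
  have hstar1 : addStar leP [0,1,2,3] (L w1L) = L A1L := by
    refine Set.Subset.antisymm ?_ fun p hp => Set.mem_iUnion.2 ⟨2, by rw [e2]; exact hp⟩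
    intro p hp
    rcases Set.mem_iUnion.1 hp with ⟨i, hi⟩
    match i, hi with
    | 0, hi => rw [e0] at hi; exact L_sub (by decide) hi
    | 1, hi => rw [e1] at hi; exact L_sub (by decide) hi
    | 2, hi => rw [e2] at hi; exact hi
    | (n+3), hi => rw [eAll n] at hi; exact hi
  -- addSeq for wS
  have f0 : addSeq leP [0,1,2,3] (L wSL) 0 = L wSL := by
    show tc (L wSL ∪ cf ([0,1,2,3] : List (Fin 4)) (L wSL)) = _
    rw [h_cfS, Set.union_empty]
    exact tc_L_eq _ wSL 0 (by decide) (by decide)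
  have j0 : minset leP (rem leP (dirSet ([0,1,2,3] : List (Fin 4))) 0) ∩
      cyc ([0,1,2,3] : List (Fin 4)) (L wSL) = L [(0,1)] := by
    rw [h_rem0, h_minD, h_cycS]; exact inter_L _ _ _ (by decide)
  have f1 : addSeq leP [0,1,2,3] (L wSL) 1 = L B1L := by
    have h : addSeq leP [0,1,2,3] (L wSL) 1 =
        if IsSPO (tc (addSeq leP [0,1,2,3] (L wSL) 0 ∪
          (minset leP (rem leP (dirSet ([0,1,2,3] : List (Fin 4))) 0) ∩
            cyc ([0,1,2,3] : List (Fin 4)) (L wSL)))) then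
          tc (addSeq leP [0,1,2,3] (L wSL) 0 ∪
            (minset leP (rem leP (dirSet ([0,1,2,3] : List (Fin 4))) 0) ∩
              cyc ([0,1,2,3] : List (Fin 4)) (L wSL)))
        else addSeq leP [0,1,2,3] (L wSL) 0 := rfl
    rw [h, f0, j0, L_union, tc_L_eq (wSL ++ [(0,1)]) B1L 2 (by decide) (by decide),
      if_pos (isSPO_L B1L (by decide))]
  have j1 : minset leP (rem leP (dirSet ([0,1,2,3] : List (Fin 4))) 1) ∩
      cyc ([0,1,2,3] : List (Fin 4)) (L wSL) = L [(1,2)] := by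
    rw [h_rem1, h_min1, h_cycS]; exact inter_L _ _ _ (by decide)
  have f2 : addSeq leP [0,1,2,3] (L wSL) 2 = L B1L := by
    have h : addSeq leP [0,1,2,3] (L wSL) 2 =
        if IsSPO (tc (addSeq leP [0,1,2,3] (L wSL) 1 ∪
          (minset leP (rem leP (dirSet ([0,1,2,3] : List (Fin 4))) 1) ∩
            cyc ([0,1,2,3] : List (Fin 4)) (L wSL)))) then
          tc (addSeq leP [0,1,2,3] (L wSL) 1 ∪
            (minset leP (rem leP (dirSet ([0,1,2,3] : List (Fin 4))) 1) ∩
              cyc ([0,1,2,3] : List (Fin 4)) (L wSL)))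
        else addSeq leP [0,1,2,3] (L wSL) 1 := rfl
    rw [h, f1, j1, L_union]
    rw [if_neg ?hneg2]
    case hneg2 =>
      intro hS
      exact hS.2 1 (Relation.TransGen.tail
        (Relation.TransGen.single (mem_L_of (by decide : ((1:Fin 4),(2:Fin 4)) ∈ B1L ++ [(1,2)])))
        (mem_L_of (by decide : ((2:Fin 4),(1:Fin 4)) ∈ B1L ++ [(1,2)])))
  have j2 : minset leP (rem leP (dirSet ([0,1,2,3] : List (Fin 4))) 2) ∩
      cyc ([0,1,2,3] : List (Fin 4)) (L wSL) = L [(2,3)] := by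
    rw [h_rem2, h_min2, h_cycS]; exact inter_L _ _ _ (by decide)
  have f3 : addSeq leP [0,1,2,3] (L wSL) 3 = L B3L := by
    have h : addSeq leP [0,1,2,3] (L wSL) 3 =
        if IsSPO (tc (addSeq leP [0,1,2,3] (L wSL) 2 ∪
          (minset leP (rem leP (dirSet ([0,1,2,3] : List (Fin 4))) 2) ∩
            cyc ([0,1,2,3] : List (Fin 4)) (L wSL)))) then
          tc (addSeq leP [0,1,2,3] (L wSL) 2 ∪
            (minset leP (rem leP (dirSet ([0,1,2,3] : List (Fin 4))) 2) ∩
              cyc ([0,1,2,3] : List (Fin 4)) (L wSL)))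
        else addSeq leP [0,1,2,3] (L wSL) 2 := rfl
    rw [h, f2, j2, L_union, tc_L_eq (B1L ++ [(2,3)]) B3L 1 (by decide) (by decide),
      if_pos (isSPO_L B3L (by decide))]
  have mem23 : ((2:Fin 4),(3:Fin 4)) ∈ addStar leP [0,1,2,3] (L wSL) :=
    Set.mem_iUnion.2 ⟨3, by rw [f3]; exact mem_L_of (by decide)⟩
  have notmem : ((2:Fin 4),(3:Fin 4)) ∉ tc (addStar leP [0,1,2,3] (L w1L) ∪ L w2L) := by
    rw [hstar1, L_union, tc_L_eq (A1L ++ w2L) C1L 2 (by decide) (by decide)]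
    exact fun h => absurd h (by decide : ¬ ((2:Fin 4),(3:Fin 4)) ∈ C1L)
    -- not coordinated
  have notCoord : ¬ Coordinated [0,1,2,3] (L w1L) (L w2L) := by
    intro hC
    have hd : L [(0,1),(1,2)] ⊆ cyc ([0,1,2,3] : List (Fin 4)) (L w1L) := by
      rw [h_cyc1]; exact L_sub (by decide)
    have hp : ∀ p ∈ L [(0,1),(1,2)],
        p ∉ tc (L w1L ∪ L w2L) ∧ (p.2, p.1) ∉ tc (L w1L ∪ L w2L) := by
      rw [h_tc12]
      show ∀ p : P4, p ∈ ([(0,1),(1,2)] : List P4) →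
        ¬ p ∈ wSL ∧ ¬ (p.2, p.1) ∈ wSL
      decide
    have hspo : IsSPO (tc (L w1L ∪ L [(0,1),(1,2)])) := by
      rw [L_union, tc_L_eq (w1L ++ [(0,1),(1,2)]) A1L 2 (by decide) (by decide)]
      exact isSPO_L A1L (by decide)
    have := hC (L [(0,1),(1,2)]) hd hp hspo
    rw [h_tc12, L_union] at this
    exact this.2 0 (Relation.TransGen.tail (Relation.TransGen.tail
      (Relation.TransGen.single
        (mem_L_of (by decide : ((0:Fin 4),(1:Fin 4)) ∈ wSL ++ [(0,1),(1,2)])))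
      (mem_L_of (by decide : ((1:Fin 4),(2:Fin 4)) ∈ wSL ++ [(0,1),(1,2)])))
      (mem_L_of (by decide : ((2:Fin 4),(0:Fin 4)) ∈ wSL ++ [(0,1),(1,2)])))
  refine ⟨[0,1,2,3], L w1L, L w2L, leP, rfl, ?_, ?_, rfl, ?_, ?_, ?_, ?_, ?_, ?_, ?_, ?_, ?_⟩
  · ext p; simp [L, w1L]
  · ext p; simp [L, w2L]
  · decide
  · exact isSPO_L w1L (by decide)
  · exact isSPO_L w2L (by decide)
  · rw [h_tc12]; exact isSPO_L wSL (by decide)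
  · exact ⟨fun a _ b _ c _ h1 h2 => le_trans h1 h2, fun a _ b _ => le_total a.1 b.1⟩
  · exact notCoord
  · rw [h_tc12]; intro hsub; exact notmem (hsub mem23)
  · rw [h_tc12]; exact mem23
  · exact notmem
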